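/- Let (κ,γ) satisfy either (κ ≤ 0 and γ > 1) or (κ > 0 and γ ≥ 1) or (0 < γ < 1 and κ > √(2γ(1-γ))). Define D = κ² + 2γ(γ-1), α₊ = ((2-γ)κ + γ√D)/(2κ² + γ³), β₋ = (κ² + γ² - κ√D)/(2κ² + γ³). Then α₊² + β₋² = 1 if and only if 0 < γ < 1 and κ = (1/2)(γ+2)√(1-γ). -/

import Mathlib

theorem stmt_13 (κ γ : ℝ)
    (h : (κ ≤ 0 ∧ 1 < γ) ∨ (0 < κ ∧ 1 ≤ γ) ∨
      (0 < γ ∧ γ < 1 ∧ Real.sqrt (2 * γ * (1 - γ)) < κ)) :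
    ((((2 - γ) * κ + γ * Real.sqrt (κ ^ 2 + 2 * γ * (γ - 1))) /
        (2 * κ ^ 2 + γ ^ 3)) ^ 2 +
     ((κ ^ 2 + γ ^ 2 - κ * Real.sqrt (κ ^ 2 + 2 * γ * (γ - 1))) /
        (2 * κ ^ 2 + γ ^ 3)) ^ 2 = 1) ↔
      (0 < γ ∧ γ < 1 ∧ κ = (1 / 2) * (γ + 2) * Real.sqrt (1 - γ)) := by
  have hγ : 0 < γ := by
    rcases h with ⟨_, h1⟩ | ⟨_, h1⟩ | ⟨h1, _, _⟩ <;> linarith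
  have hd : 0 < 2 * κ ^ 2 + γ ^ 3 := by positivity
  have hd' : (2 * κ ^ 2 + γ ^ 3) ≠ 0 := ne_of_gt hd
  have hD : 0 ≤ κ ^ 2 + 2 * γ * (γ - 1) := by
    rcases h with ⟨hk, h1⟩ | ⟨hk, h1⟩ | ⟨h1, h2, h3⟩
    · nlinarith
    · nlinarith
    · have h0 : 0 ≤ 2 * γ * (1 - γ) := by nlinarith
      have hsq := Real.sq_sqrt h0
      nlinarith [Real.sqrt_nonneg (2 * γ * (1 - γ))]
  set s := Real.sqrt (κ ^ 2 + 2 * γ * (γ - 1)) with hs_def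
  have hs0 : 0 ≤ s := Real.sqrt_nonneg _
  have hs2 : s ^ 2 = κ ^ 2 + 2 * γ * (γ - 1) := Real.sq_sqrt hD
  set α := ((2 - γ) * κ + γ * s) / (2 * κ ^ 2 + γ ^ 3) with hα_def
  set β := (κ ^ 2 + γ ^ 2 - κ * s) / (2 * κ ^ 2 + γ ^ 3) with hβ_def
  have h1 : κ * α + γ * β = 1 := by
    rw [hα_def, hβ_def]; field_simp; ring
  have h2 : γ * α ^ 2 + 2 * β ^ 2 = 2 * β := by
    rw [hα_def, hβ_def]; field_simp
    linear_combination (γ ^ 3 + 2 * κ ^ 2) * hs2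
  have hnum : 0 < (2 - γ) * κ + γ * s := by
    rcases h with ⟨hk, hg⟩ | ⟨hk, hg⟩ | ⟨hg, hg2, hk⟩
    · nlinarith [hs2, hs0, sq_nonneg (s + κ), sq_nonneg (s - κ)]
    · nlinarith [hs2, hs0, sq_nonneg (s + κ), sq_nonneg (s - κ),
        sq_nonneg (γ * s - (γ - 2) * κ), mul_pos hk hk]
    · have hk0 : 0 < κ := lt_of_le_of_lt (Real.sqrt_nonneg _) hk
      nlinarith
  have hα : 0 < α := div_pos hnum hd
  constructor
  · intro hEq
    have h3 : ((2 - γ) * β - γ) * (β - 1) = 0 := by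
      linear_combination h2 - γ * hEq
    have hβ1 : β ≠ 1 := by
      intro hb
      rw [hb] at hEq
      nlinarith [pow_pos hα 2]
    have h4 : (2 - γ) * β = γ := by
      rcases mul_eq_zero.mp h3 with h' | h'
      · linarith
      · exact absurd (by linarith) hβ1
    have hγ2 : γ ≠ 2 := by
      intro hg2; rw [hg2] at h4; norm_num at h4
    have h5 : α ^ 2 * (2 - γ) ^ 2 = 4 * (1 - γ) := by
      linear_combination (2 - γ) ^ 2 * hEq - ((2 - γ) * β + γ) * h4
    have hγ1 : γ < 1 := by
      have hne : (2 - γ) ≠ 0 := fun hh => hγ2 (by linarith)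
      nlinarith [pow_pos hα 2, pow_pos (abs_pos.mpr hne) 2, sq_abs (2 - γ),
        mul_pos (pow_pos hα 2) (pow_pos (abs_pos.mpr hne) 2)]
    refine ⟨hγ, hγ1, ?_⟩
    set u := Real.sqrt (1 - γ) with hu_def
    have hu2 : u ^ 2 = 1 - γ := Real.sq_sqrt (by linarith)
    have hu0 : 0 < u := Real.sqrt_pos.mpr (by linarith)
    have h6 : α * (2 - γ) = 2 * u := by
      have hprod : (α * (2 - γ) - 2 * u) * (α * (2 - γ) + 2 * u) = 0 := by
        linear_combination h5 - 4 * hu2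
      have hpos : 0 < α * (2 - γ) + 2 * u := by
        have : 0 < α * (2 - γ) := mul_pos hα (by linarith)
        linarith
      have := mul_eq_zero.mp hprod
      rcases this with h' | h'
      · linarith
      · linarith
    -- κ * α * (2 - γ) = (1 - γ) * (γ + 2)
    have h7 : κ * (2 * u) = (γ + 2) * u ^ 2 := by
      rw [hu2]
      have : κ * (α * (2 - γ)) = (γ + 2) * (1 - γ) := by
        linear_combination (2 - γ) * h1 - γ * h4
      rw [h6] at this
      linarith
    have : (2 * κ - (γ + 2) * u) * u = 0 := by linear_combination h7
    rcases mul_eq_zero.mp this with h' | h'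
    · linarith
    · exact absurd h' (ne_of_gt hu0)
  · rintro ⟨hg0, hg1, hk⟩
    set u := Real.sqrt (1 - γ) with hu_def
    have hu2 : u ^ 2 = 1 - γ := Real.sq_sqrt (by linarith)
    have hu0 : 0 ≤ u := Real.sqrt_nonneg _
    have hs_val : s = (2 - γ) / 2 * u := by
      rw [hs_def, show κ ^ 2 + 2 * γ * (γ - 1) = ((2 - γ) / 2 * u) ^ 2 by
        rw [hk]; linear_combination 2 * γ * hu2]
      exact Real.sqrt_sq (by nlinarith)
    have h2γ : (2 - γ) ≠ 0 := by intro hh; linarith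
    have hα_val : α = 2 * u / (2 - γ) := by
      rw [hα_def, hs_val, hk, div_eq_div_iff (by positivity) h2γ]
      linear_combination (-(u * (γ + 2) ^ 2)) * hu2
    have hβ_val : β = γ / (2 - γ) := by
      rw [hβ_def, hs_val, hk, div_eq_div_iff (by positivity) h2γ]
      linear_combination (-(γ ^ 2 * (γ + 2))) * hu2
    rw [hα_val, hβ_val]
    field_simp
    linear_combination 4 * hu2
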